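/- Let A be a real n×n matrix with all eigenvalues γᵢ ≥ 0 of A·Aᵀ, η > 0, and let M = [[I, -η·A·Aᵀ],[η·I, I]]. Then every eigenvalue μ of M satisfies μ² - 2μ + 1 + μ·η²·γ = 0 for some eigenvalue γ of A·Aᵀ, and hence |μ|² = 1 + γ·η² ≥ 1. -/

import Mathlib

open Matrix


/-- Every complex eigenvalue `μ` of the Euler update matrix
`M = [[I, -η A Aᵀ],[η I, I]]` satisfies `(μ - 1)² + γ η² = 0` for some
eigenvalue `γ ≥ 0` of `A Aᵀ`, and hence `|μ|² = 1 + γ η² ≥ 1`. -/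
theorem eigenvalue_euler_update_matrix (n : ℕ) (A : Matrix (Fin n) (Fin n) ℝ)
    (η : ℝ) (hη : 0 < η)
    (M : Matrix (Fin n ⊕ Fin n) (Fin n ⊕ Fin n) ℝ)
    (hM : M = Matrix.fromBlocks 1 (-(η • (A * A.transpose)))
      (η • (1 : Matrix (Fin n) (Fin n) ℝ)) 1)
    (μ : ℂ) (v : (Fin n ⊕ Fin n) → ℂ) (hv : v ≠ 0)
    (h : (M.map (fun a => (a : ℂ))).mulVec v = μ • v) :
    ∃ γ : ℝ, (∃ w : Fin n → ℝ, w ≠ 0 ∧ (A * A.transpose).mulVec w = γ • w) ∧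
      (μ - 1) ^ 2 + (γ : ℂ) * (η : ℂ) ^ 2 = 0 ∧
      ‖μ‖ ^ 2 = 1 + γ * η ^ 2 ∧ 1 ≤ 1 + γ * η ^ 2 := by
  subst hM
  have hη0 : (η : ℂ) ≠ 0 := by exact_mod_cast ne_of_gt hη
  set S : Matrix (Fin n) (Fin n) ℝ := A * A.transpose with hS
  set Sc : Matrix (Fin n) (Fin n) ℂ := S.map (fun a => (a : ℂ)) with hSc
  set x : Fin n → ℂ := fun i => v (Sum.inl i) with hx
  set y : Fin n → ℂ := fun i => v (Sum.inr i) with hy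
  have e1 : ∀ i, x i - (η : ℂ) * Sc.mulVec y i = μ * x i := by
    intro i
    have := congrFun h (Sum.inl i)
    simp [Matrix.mulVec, dotProduct, Fintype.sum_sum_type, Matrix.one_apply, apply_ite,
      Finset.sum_ite_eq, mul_comm, hSc, hS] at this ⊢
    rw [← this]; ring_nf
    rw [Finset.mul_sum]; ring_nf
    rfl
  have e2 : ∀ i, (η : ℂ) * x i + y i = μ * y i := by
    intro i
    have := congrFun h (Sum.inr i)
    simpa [Matrix.mulVec, dotProduct, Fintype.sum_sum_type, Matrix.one_apply, apply_ite,
      Finset.sum_ite_eq, mul_comm, hx, hy] using this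
  have hxy : ∀ i, (η : ℂ) * x i = (μ - 1) * y i := by
    intro i; linear_combination e2 i
  have hSy : ∀ i, (η : ℂ) ^ 2 * Sc.mulVec y i = -((μ - 1) ^ 2) * y i := by
    intro i; linear_combination (-(η : ℂ)) * (e1 i) + (1 - μ) * (hxy i)
  set γc : ℂ := -((μ - 1) ^ 2) / (η : ℂ) ^ 2 with hγc
  have heig : ∀ i, Sc.mulVec y i = γc * y i := by
    intro i
    rw [hγc]
    field_simp
    linear_combination hSy i
  have hy0 : y ≠ 0 := by
    intro h0
    apply hv
    funext j
    rcases j with i | i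
    · have := hxy i
      rw [h0] at this
      simp at this
      rcases this with h' | h'
      · exact absurd h' hη.ne'
      · exact h'
    · exact congrFun h0 i
  -- positivity of γ
  set z : Fin n → ℂ := (A.transpose.map (fun a => (a : ℂ))).mulVec y with hz
  have key : ∀ i, Sc.mulVec y i = (A.map (fun a => (a : ℂ))).mulVec z i := by
    intro i
    simp only [hSc, hS, hz, Matrix.mulVec, dotProduct, Matrix.map_apply, Matrix.mul_apply,
      Matrix.transpose_apply]
    push_cast
    simp only [Finset.sum_mul, Finset.mul_sum]
    rw [Finset.sum_comm]
    exact Finset.sum_congr rfl fun j _ => Finset.sum_congr rfl fun k _ => by ring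
  set p : ℝ := ∑ i, Complex.normSq (y i) with hp
  set q : ℝ := ∑ i, Complex.normSq (z i) with hq
  have hkey2 : γc * (p : ℂ) = (q : ℂ) := by
    have lhs : ∑ i, (starRingEnd ℂ) (y i) * Sc.mulVec y i = γc * (p : ℂ) := by
      simp only [heig]
      rw [hp]
      push_cast
      rw [Finset.mul_sum]
      congr 1; funext i
      rw [← Complex.mul_conj]
      ring
    have rhs : ∑ i, (starRingEnd ℂ) (y i) * Sc.mulVec y i = (q : ℂ) := by
      calc ∑ i, (starRingEnd ℂ) (y i) * Sc.mulVec y i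
          = ∑ i, (starRingEnd ℂ) (y i) * (A.map (fun a => (a : ℂ))).mulVec z i := by
            simp only [key]
        _ = ∑ j, (starRingEnd ℂ) (z j) * z j := by
            simp only [Matrix.mulVec, dotProduct, Finset.mul_sum]
            rw [Finset.sum_comm]
            congr 1; funext j
            rw [hz]
            simp only [Matrix.mulVec, dotProduct, map_sum, Finset.sum_mul]
            congr 1; funext i
            simp [Matrix.map_apply, Complex.conj_ofReal]
            ring
        _ = (q : ℂ) := by
            rw [hq]; push_cast
            congr 1; funext j
            rw [← Complex.mul_conj]
            ring
    rw [← lhs, rhs]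
  have hppos : 0 < p := by
    rw [hp]
    have : ∃ i, y i ≠ 0 := by
      by_contra hc
      push_neg at hc
      exact hy0 (funext hc)
    obtain ⟨i, hi⟩ := this
    exact Finset.sum_pos' (fun j _ => Complex.normSq_nonneg _)
      ⟨i, Finset.mem_univ i, Complex.normSq_pos.2 hi⟩
  have hqnn : 0 ≤ q := Finset.sum_nonneg fun j _ => Complex.normSq_nonneg _
  set γ : ℝ := q / p with hγ
  have hγnn : 0 ≤ γ := div_nonneg hqnn hppos.le
  have hγceq : γc = (γ : ℂ) := by
    rw [hγ]
    push_cast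
    rw [eq_div_iff (by exact_mod_cast hppos.ne')]
    exact hkey2
  -- real eigenvector
  have hdetC : (Sc - γc • 1).det = 0 := by
    rw [← Matrix.exists_mulVec_eq_zero_iff]
    refine ⟨y, hy0, ?_⟩
    funext i
    simp [Matrix.sub_mulVec, Matrix.smul_mulVec, Matrix.one_mulVec, heig i]
  have hmapeq : (S - γ • 1).map (fun a => (a : ℂ)) = Sc - γc • 1 := by
    rw [hγceq]
    ext i j
    simp only [hSc, Matrix.map_apply, Matrix.sub_apply, Matrix.smul_apply, Matrix.one_apply,
      smul_eq_mul]
    split_ifs <;> push_cast <;> ring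
  have hdetR : (S - γ • 1).det = 0 := by
    have h1 := (Complex.ofRealHom : ℝ →+* ℂ).map_det (S - γ • 1)
    rw [RingHom.mapMatrix_apply] at h1
    have h2 : (S - γ • 1).map (⇑(Complex.ofRealHom : ℝ →+* ℂ)) = Sc - γc • 1 := hmapeq
    rw [h2, hdetC] at h1
    exact Complex.ofReal_eq_zero.mp h1
  obtain ⟨w, hw0, hw⟩ := (Matrix.exists_mulVec_eq_zero_iff).2 hdetR
  have hweig : S.mulVec w = γ • w := by
    have := hw
    rw [Matrix.sub_mulVec, Matrix.smul_mulVec, Matrix.one_mulVec, sub_eq_zero] at this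
    exact this
  refine ⟨γ, ⟨w, hw0, hweig⟩, ?_, ?_, ?_⟩
  · have : -((μ - 1) ^ 2) / (η : ℂ) ^ 2 = (γ : ℂ) := hγceq
    field_simp at this
    linear_combination -this
  · have h2 : (μ - 1) ^ 2 + (γ : ℂ) * (η : ℂ) ^ 2 = 0 := by
      have : -((μ - 1) ^ 2) / (η : ℂ) ^ 2 = (γ : ℂ) := hγceq
      field_simp at this
      linear_combination -this
    have hre := congrArg Complex.re h2
    have him := congrArg Complex.im h2
    simp [Complex.add_re, Complex.add_im, pow_two, Complex.mul_re, Complex.mul_im,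
      Complex.sub_re, Complex.sub_im, Complex.ofReal_re, Complex.ofReal_im] at hre him
    rw [Complex.sq_norm, Complex.normSq_apply]
    set a := μ.re; set b := μ.im
    have hc : 0 ≤ γ * η ^ 2 := by positivity
    have him2 : (a - 1) * b = 0 := by linarith
    rcases mul_eq_zero.1 him2 with h' | h'
    · -- a - 1 = 0
      nlinarith [hre, h']
    · nlinarith [hre, h', sq_nonneg (a - 1)]
  · nlinarith [hγnn, sq_nonneg η, mul_nonneg hγnn (sq_nonneg η)]
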